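/- Let 𝔽 be a field of characteristic zero, p, q ∈ 𝔽[x_1,…,x_n], and let {S_0, S_1, …, S_m} be an admissible cover of S_{p,q}. Let ℓ ∈ {0,1,…,m} and suppose r, s ∈ V_𝔽(S_0 ∪ ⋯ ∪ S_{ℓ−1}). Then for every c_α(a) ∈ S_0 ∪ ⋯ ∪ S_ℓ one has L_{a=r}(c_α)(a) = L_{a=s}(c_α)(a) as polynomials in a; in particular, c_α(r) = L_{a=s}(c_α)(r). -/

import Mathlib

open MvPolynomial

noncomputable section

variable {F : Type*} [Field F] [CharZero F] {n : ℕ}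

/-- `p(x+a) - q(x)` as a polynomial in the variables `x` with coefficients in `F[a]`. -/
def shiftDiff (p q : MvPolynomial (Fin n) F) :
    MvPolynomial (Fin n) (MvPolynomial (Fin n) F) :=
  aeval (fun i => X i + C (X i)) p - map C q

/-- The set `S_{p,q} ⊆ F[a]` of coefficients of `p(x+a) - q(x)` with respect to `x`. -/
def coeffSet (p q : MvPolynomial (Fin n) F) : Set (MvPolynomial (Fin n) F) :=
  {c | ∃ α ∈ (shiftDiff p q).support, c = coeff α (shiftDiff p q)}

/-- The zero set `V_F(P)` of a set of polynomials `P ⊆ F[a]`. -/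
def zeroSet (P : Set (MvPolynomial (Fin n) F)) : Set (Fin n → F) :=
  {s | ∀ f ∈ P, eval s f = 0}

/-- The linearization `L_{a=s}(f) = H^0(f) + H^1(f) + ∑_{i≥2} H^i(f)(s)`. -/
def linearize (s : Fin n → F) (f : MvPolynomial (Fin n) F) : MvPolynomial (Fin n) F :=
  homogeneousComponent 0 f + homogeneousComponent 1 f +
    C (∑ i ∈ Finset.Icc 2 f.totalDegree, eval s (homogeneousComponent i f))

/-- `{S 0, …, S m}` is an admissible cover of `S_{p,q}`:
the sets cover `S_{p,q}`, all members of `S 0` have total degree at most one in `a`,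
and whenever `c_α ∈ S ℓ` (`1 ≤ ℓ ≤ m`) and `β > α` with `x^β` occurring in
`p(x+a) - q(x)`, then `c_β ∈ S 0 ∪ ⋯ ∪ S (ℓ-1)`. -/
def IsAdmissibleCover (p q : MvPolynomial (Fin n) F) (m : ℕ)
    (S : ℕ → Set (MvPolynomial (Fin n) F)) : Prop :=
  (⋃ i ∈ Finset.range (m + 1), S i) = coeffSet p q ∧
  (∀ c ∈ S 0, c.totalDegree ≤ 1) ∧
  (∀ ℓ, 1 ≤ ℓ → ℓ ≤ m → ∀ α ∈ (shiftDiff p q).support,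
      coeff α (shiftDiff p q) ∈ S ℓ →
      ∀ β ∈ (shiftDiff p q).support, α < β →
        coeff β (shiftDiff p q) ∈ ⋃ i ∈ Finset.range ℓ, S i)

/-- The shift operator `f(x) ↦ f(x+a)` from `F[x]` to `F[a][x]`. -/
def shiftOp : MvPolynomial (Fin n) F →ₐ[F] MvPolynomial (Fin n) (MvPolynomial (Fin n) F) :=
  aeval (fun i => X i + C (X i))

lemma shiftOp_apply (p : MvPolynomial (Fin n) F) :
    shiftOp p = aeval (fun i => X i + C (X i)) p := rfl

lemma shiftOp_C (r : F) : shiftOp (C r : MvPolynomial (Fin n) F) = C (C r) := by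
  rw [shiftOp_apply, aeval_C,
    IsScalarTower.algebraMap_apply F (MvPolynomial (Fin n) F)
      (MvPolynomial (Fin n) (MvPolynomial (Fin n) F)), algebraMap_eq, algebraMap_eq]

lemma shiftOp_X (i : Fin n) :
    shiftOp (X i : MvPolynomial (Fin n) F) = X i + C (X i) := by
  rw [shiftOp_apply, aeval_X]

/-- classification of degree-one exponents -/
lemma degree_eq_one_exists (δ : Fin n →₀ ℕ) (h : δ.degree = 1) :
    ∃ j, δ = Finsupp.single j 1 := by
  have hδ : δ ≠ 0 := by
    intro h0; rw [h0] at h; simp [Finsupp.degree] at h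
  obtain ⟨j, hj⟩ := Finsupp.ne_iff.mp hδ
  simp only [Finsupp.coe_zero, Pi.zero_apply] at hj
  have hjs : j ∈ δ.support := Finsupp.mem_support_iff.mpr hj
  have h1 : δ j ≤ 1 := h ▸ Finset.single_le_sum (fun i _ => Nat.zero_le _) hjs
  have hj1 : δ j = 1 := le_antisymm h1 (Nat.one_le_iff_ne_zero.mpr hj)
  refine ⟨j, Finsupp.ext fun k => ?_⟩
  rcases eq_or_ne k j with rfl | hk
  · simp [hj1]
  · simp only [Finsupp.single_apply, if_neg (Ne.symm hk)]
    by_contra hkne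
    have hks : k ∈ δ.support := Finsupp.mem_support_iff.mpr hkne
    have : δ j + δ k ≤ δ.degree := by
      have := Finset.add_sum_erase _ δ hjs
      have hks' : k ∈ δ.support.erase j := Finset.mem_erase.mpr ⟨hk, hks⟩
      have h2 : δ k ≤ ∑ i ∈ δ.support.erase j, δ i :=
        Finset.single_le_sum (fun i _ => Nat.zero_le _) hks'
      calc δ j + δ k ≤ δ j + ∑ i ∈ δ.support.erase j, δ i := by omega
        _ = δ.degree := this
    omega

/-- coefficients of `(X a + C A)^k` : supported below `single a k`, top coeff 1. -/
lemma coeff_shift_pow (a : Fin n) (A : MvPolynomial (Fin n) F) (k : ℕ) :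
    (∀ δ : Fin n →₀ ℕ, ¬ δ ≤ Finsupp.single a k →
      coeff δ ((X a + C A) ^ k) = 0) ∧
    coeff (Finsupp.single a k) ((X a + C A) ^ k) = 1 := by
  have hexp : (X a + C A) ^ k
      = ∑ m ∈ Finset.range (k + 1),
          C (A ^ (k - m) * (k.choose m : MvPolynomial (Fin n) F)) * X a ^ m := by
    rw [(Commute.all (X a) (C A)).add_pow]
    refine Finset.sum_congr rfl fun m _ => ?_
    rw [map_mul, map_pow, map_natCast]
    ring
  constructor
  · intro δ hδ
    rw [hexp, coeff_sum]
    refine Finset.sum_eq_zero fun m hm => ?_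
    have hm' : m ≤ k := Nat.lt_succ_iff.mp (Finset.mem_range.mp hm)
    rw [coeff_C_mul, coeff_X_pow]
    have : Finsupp.single a m ≠ δ := by
      rintro rfl
      exact hδ (by
        rw [Finsupp.single_le_iff, Finsupp.single_apply, if_pos rfl]
        omega)
    rw [if_neg this, mul_zero]
  · rw [hexp, coeff_sum]
    rw [Finset.sum_eq_single k]
    · rw [coeff_C_mul, coeff_X_pow, if_pos rfl]
      simp
    · intro m _ hmk
      rw [coeff_C_mul, coeff_X_pow, if_neg, mul_zero]
      intro hcon
      exact hmk (by simpa using congrArg (fun f : Fin n →₀ ℕ => f a) hcon)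
    · intro hk
      exact absurd (Finset.self_mem_range_succ k) hk

set_option maxHeartbeats 1000000 in
/-- triangularity for monomials -/
lemma coeff_shift_monomial (γ : Fin n →₀ ℕ) (c : F) :
    (∀ β : Fin n →₀ ℕ, ¬ β ≤ γ →
      coeff β (shiftOp (monomial γ c : MvPolynomial (Fin n) F)) = 0) ∧
    coeff γ (shiftOp (monomial γ c : MvPolynomial (Fin n) F)) = C c := by
  induction γ using Finsupp.induction with
  | zero =>
    have : (monomial (0 : Fin n →₀ ℕ) c : MvPolynomial (Fin n) F) = C c := by
      rw [MvPolynomial.C_apply]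
    have halg : shiftOp (monomial (0 : Fin n →₀ ℕ) c : MvPolynomial (Fin n) F)
        = C (C c) := by
      rw [this, shiftOp_apply, aeval_C,
        IsScalarTower.algebraMap_apply F (MvPolynomial (Fin n) F)
          (MvPolynomial (Fin n) (MvPolynomial (Fin n) F)), algebraMap_eq, algebraMap_eq]
    rw [halg]
    constructor
    · intro β hβ
      have hβ0 : (0 : Fin n →₀ ℕ) ≠ β := by
        rintro rfl; exact hβ (le_refl _)
      rw [coeff_C, if_neg hβ0]
    · rw [coeff_C, if_pos rfl]
  | single_add a k γ' ha' hk ih =>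
    have hmon : (monomial (Finsupp.single a k + γ') c : MvPolynomial (Fin n) F)
        = monomial (Finsupp.single a k) 1 * monomial γ' c := by
      rw [monomial_mul, one_mul]
    have hfac : shiftOp (monomial (Finsupp.single a k) (1:F) : MvPolynomial (Fin n) F)
        = (X a + C (X a)) ^ k := by
      rw [← X_pow_eq_monomial, map_pow, shiftOp_apply, aeval_X]
    have hpow := coeff_shift_pow a (X a : MvPolynomial (Fin n) F) k
    have key : ∀ β : Fin n →₀ ℕ,
        coeff β (shiftOp (monomial (Finsupp.single a k + γ') c : MvPolynomial (Fin n) F))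
        = ∑ x ∈ Finset.HasAntidiagonal.antidiagonal β,
            coeff x.1 ((X a + C (X a) : MvPolynomial (Fin n) (MvPolynomial (Fin n) F)) ^ k) *
            coeff x.2 (shiftOp (monomial γ' c : MvPolynomial (Fin n) F)) := by
      intro β
      rw [hmon, map_mul, hfac, coeff_mul]
    constructor
    · intro β hβ
      rw [key]
      refine Finset.sum_eq_zero fun x hx => ?_
      by_cases h1 : x.1 ≤ Finsupp.single a k
      · by_cases h2 : x.2 ≤ γ'
        · exfalso
          apply hβ
          have := Finset.HasAntidiagonal.mem_antidiagonal.mp hx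
          calc β = x.1 + x.2 := this.symm
            _ ≤ Finsupp.single a k + γ' := add_le_add h1 h2
        · rw [ih.1 x.2 h2, mul_zero]
      · rw [hpow.1 x.1 h1, zero_mul]
    · rw [key]
      rw [Finset.sum_eq_single_of_mem (Finsupp.single a k, γ')
        (Finset.HasAntidiagonal.mem_antidiagonal.mpr rfl)]
      · rw [hpow.2, ih.2, one_mul]
      · rintro ⟨u, v⟩ huv hne
        have hsum : u + v = Finsupp.single a k + γ' := Finset.HasAntidiagonal.mem_antidiagonal.mp huv
        by_cases h1 : u ≤ Finsupp.single a k
        · by_cases h2 : v ≤ γ'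
          · exfalso
            apply hne
            have hu : u = Finsupp.single a k := by
              refine Finsupp.ext fun i => Nat.le_antisymm (h1 i) ?_
              have h3 := congrArg (fun f : Fin n →₀ ℕ => f i) hsum
              simp only [Finsupp.add_apply] at h3
              have := h1 i
              have := h2 i
              omega
            have hv : v = γ' := by
              have : u + v = u + γ' := by rw [hsum, hu]
              exact add_left_cancel this
            simp [hu, hv]
          · rw [ih.1 v h2, mul_zero]
        · rw [hpow.1 u h1, zero_mul]


/-- **Triangularity**: if all coefficients of `W` strictly above `α` vanish, then the
`α` coefficient of `W(x+a)` is the constant `coeff α W`. -/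
lemma coeff_shift_of_upper_zero (W : MvPolynomial (Fin n) F) (α : Fin n →₀ ℕ)
    (h : ∀ β : Fin n →₀ ℕ, α < β → coeff β W = 0) :
    coeff α (shiftOp W) = C (coeff α W) := by
  conv_lhs => rw [← support_sum_monomial_coeff W]
  rw [map_sum, coeff_sum]
  by_cases hα : α ∈ W.support
  · rw [Finset.sum_eq_single α]
    · exact (coeff_shift_monomial α (coeff α W)).2
    · intro γ hγ hne
      by_cases hle : α ≤ γ
      · have hlt : α < γ := lt_of_le_of_ne hle (Ne.symm hne)
        rw [h γ hlt]
        simp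
      · exact (coeff_shift_monomial γ (coeff γ W)).1 α hle
    · intro hmem; exact absurd hα hmem
  · have h0 : coeff α W = 0 := by
      by_contra hc
      exact hα (MvPolynomial.mem_support_iff.mpr hc)
    rw [h0, map_zero]
    refine Finset.sum_eq_zero fun γ hγ => ?_
    by_cases hle : α ≤ γ
    · rcases eq_or_lt_of_le hle with rfl | hlt2
      · exact absurd hγ hα
      · rw [h γ hlt2]; simp
    · exact (coeff_shift_monomial γ (coeff γ W)).1 α hle
/-- `H^n(C a) = 0` for `n ≠ 0`. -/
lemma homogeneousComponent_C_eq_zero {k : ℕ} (hk : k ≠ 0) (a : F) :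
    homogeneousComponent k (C a : MvPolynomial (Fin n) F) = 0 := by
  classical
  ext d
  rw [coeff_homogeneousComponent]
  split_ifs with hd
  · rw [coeff_C]
    split_ifs with h0
    · exfalso
      apply hk
      rw [← h0] at hd
      simpa [Finsupp.degree] using hd.symm
    · rfl
  · rfl

/-- Evaluating the coefficients of `p(x+a)` at `a = w` yields `p(x+w)`. -/
lemma map_eval_shiftOp (w : Fin n → F) (p : MvPolynomial (Fin n) F) :
    map (eval w) (shiftOp p) = aeval (fun i => X i + C (w i)) p := by
  have h : (map (eval w)).comp (shiftOp (F := F) (n := n)).toRingHom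
      = (aeval (fun i => X i + C (w i)) :
          MvPolynomial (Fin n) F →ₐ[F] MvPolynomial (Fin n) F).toRingHom := by
    apply ringHom_ext
    · intro r
      simp only [RingHom.coe_comp, Function.comp_apply, AlgHom.toRingHom_eq_coe,
        RingHom.coe_coe, shiftOp_C, map_C, eval_C, aeval_C, algebraMap_eq]
    · intro i
      simp only [RingHom.coe_comp, Function.comp_apply, AlgHom.toRingHom_eq_coe,
        RingHom.coe_coe, shiftOp_X, map_add, map_X, map_C, eval_X, aeval_X]
  exact RingHom.congr_fun h p

/-- Shifting the coefficients of `p(x+a)` by `w` yields the coefficients of `p(x+a+w)`,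
which equal the coefficients of `(p(x+w))(x+a)`. -/
lemma map_shift_shiftOp (w : Fin n → F) (p : MvPolynomial (Fin n) F) :
    map ((aeval (fun i => X i + C (w i)) :
        MvPolynomial (Fin n) F →ₐ[F] MvPolynomial (Fin n) F) : _ →+* _) (shiftOp p)
      = shiftOp (aeval (fun i => X i + C (w i)) p) := by
  set σw : MvPolynomial (Fin n) F →ₐ[F] MvPolynomial (Fin n) F :=
    aeval (fun i => X i + C (w i)) with hσw
  have h : (map (σw : _ →+* _)).comp (shiftOp (F := F) (n := n)).toRingHom
      = (shiftOp (F := F) (n := n)).toRingHom.comp (σw : _ →+* _) := by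
    apply ringHom_ext
    · intro r
      simp only [RingHom.coe_comp, Function.comp_apply, AlgHom.toRingHom_eq_coe,
        RingHom.coe_coe, shiftOp_C, map_C, hσw, aeval_C, algebraMap_eq]
    · intro i
      simp only [RingHom.coe_comp, Function.comp_apply, AlgHom.toRingHom_eq_coe,
        RingHom.coe_coe, hσw, aeval_X, map_add, shiftOp_X, shiftOp_C, map_X, map_C]
      ring
  exact RingHom.congr_fun h p

/-- Composing evaluation with a shift. -/
lemma eval_shift (v w : Fin n → F) (g : MvPolynomial (Fin n) F) :
    eval v (aeval (fun i => X i + C (w i)) g) = eval (fun i => v i + w i) g := by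
  have h : (eval v).comp ((aeval (fun i => X i + C (w i)) :
      MvPolynomial (Fin n) F →ₐ[F] MvPolynomial (Fin n) F) : _ →+* _)
      = eval (fun i => v i + w i) := by
    apply ringHom_ext
    · intro r
      simp [algebraMap_eq]
    · intro i
      simp
  exact RingHom.congr_fun h g

/-- Evaluating coefficients of `p(x+a)` at `w`: `eval w (coeff β (p(x+a))) = coeff β (p(x+w))`. -/
lemma eval_coeff_shiftOp (w : Fin n → F) (p : MvPolynomial (Fin n) F) (β : Fin n →₀ ℕ) :
    eval w (coeff β (shiftOp p)) = coeff β (aeval (fun i => X i + C (w i)) p) := by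
  rw [← map_eval_shiftOp, coeff_map]

/-- scaling a polynomial all of whose exponents have degree `i` -/
lemma eval_mul_of_degree_eq (φ : MvPolynomial (Fin n) F) (i : ℕ)
    (hφ : ∀ δ ∈ φ.support, Finsupp.degree δ = i) (c : F) (u : Fin n → F) :
    eval (fun j => c * u j) φ = c ^ i * eval u φ := by
  rw [eval_eq, eval_eq, Finset.mul_sum]
  refine Finset.sum_congr rfl fun d hd => ?_
  have hdeg : ∑ j ∈ d.support, d j = i := hφ d hd
  have : ∏ j ∈ d.support, (c * u j) ^ d j
      = c ^ i * ∏ j ∈ d.support, u j ^ d j := by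
    rw [← hdeg, ← Finset.prod_pow_eq_pow_sum]
    rw [← Finset.prod_mul_distrib]
    refine Finset.prod_congr rfl fun j _ => ?_
    rw [mul_pow]
  rw [this]
  ring

/-- single-exponent classification gives additivity of evaluation in degree one -/
lemma eval_sub_of_degree_one (φ : MvPolynomial (Fin n) F)
    (hφ : ∀ δ ∈ φ.support, Finsupp.degree δ = 1) (r s : Fin n → F) :
    eval r φ - eval s φ = eval (fun j => r j - s j) φ := by
  rw [eval_eq, eval_eq, eval_eq, ← Finset.sum_sub_distrib]
  refine Finset.sum_congr rfl fun d hd => ?_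
  obtain ⟨j, rfl⟩ := degree_eq_one_exists d (hφ d hd)
  have hsupp : (Finsupp.single j 1).support = {j} :=
    Finsupp.support_single_ne_zero j one_ne_zero
  rw [hsupp]
  simp only [Finset.prod_singleton, Finsupp.single_eq_same, pow_one]
  ring

/-- **Key analytic lemma**: if the shift of `e` between `r` and `s` is constant,
then `eval r e - eval s e` is captured by the degree-one component. -/
lemma eval_sub_eq_eval_H1 (e : MvPolynomial (Fin n) F) (r s : Fin n → F)
    (hshift : aeval (fun i => X i + C (r i)) e - aeval (fun i => X i + C (s i)) e
      = C (eval r e - eval s e)) :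
    eval r e - eval s e
      = eval r (homogeneousComponent 1 e) - eval s (homogeneousComponent 1 e) := by
  classical
  set u : Fin n → F := fun j => r j - s j with hu
  set κ : F := eval r e - eval s e with hκ
  -- Step 1: e(v + u) = e(v) + κ for every v
  have hstep : ∀ v : Fin n → F, eval (fun j => v j + u j) e = eval v e + κ := by
    intro v
    have h1 := congrArg (eval (fun j => v j - s j)) hshift
    rw [map_sub, eval_shift, eval_shift, eval_C] at h1
    have h2 : (fun i => v i - s i + r i) = fun j => v j + u j := by
      funext j; simp [hu]; ring
    have h3 : (fun i => v i - s i + s i) = v := by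
      funext j; ring
    rw [h2, h3] at h1
    exact sub_eq_iff_eq_add'.mp h1
  -- Step 2: e(m•u) = e(0•u) + m κ
  have hE : ∀ m : ℕ, eval (fun j => (m : F) * u j) e
      = eval (fun j => (0 : F) * u j) e + m * κ := by
    intro m
    induction m with
    | zero => simp
    | succ m ih =>
      have h4 : (fun j => ((m + 1 : ℕ) : F) * u j)
          = fun j => ((m : F) * u j) + u j := by
        funext j; push_cast; ring
      rw [h4, hstep (fun j => (m : F) * u j), ih]
      push_cast; ring
  -- Step 3: decompose e into homogeneous components
  set d := e.totalDegree with hd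
  have hdecomp : ∑ i ∈ Finset.range (d + 2), homogeneousComponent i e = e := by
    rw [Finset.sum_range_succ, homogeneousComponent_eq_zero (d + 1) e (by omega),
      add_zero]
    exact sum_homogeneousComponent e
  set h : ℕ → F := fun i => eval u (homogeneousComponent i e) with hh
  have hscale : ∀ (c : F), eval (fun j => c * u j) e
      = ∑ i ∈ Finset.range (d + 2), c ^ i * h i := by
    intro c
    conv_lhs => rw [← hdecomp]
    rw [map_sum]
    refine Finset.sum_congr rfl fun i _ => ?_
    refine eval_mul_of_degree_eq _ i (fun δ hδ => ?_) c u
    have := MvPolynomial.mem_support_iff.mp hδ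
    rw [coeff_homogeneousComponent] at this
    by_contra hne
    rw [if_neg hne] at this
    exact this rfl
  -- Step 4: the polynomial χ vanishes on ℕ
  set χ : Polynomial F :=
    (∑ i ∈ Finset.range (d + 2), Polynomial.C (h i) * Polynomial.X ^ i)
      - (Polynomial.C (eval (fun j => (0 : F) * u j) e) + Polynomial.C κ * Polynomial.X)
    with hχdef
  have hroot : ∀ m : ℕ, χ.eval ((m : F)) = 0 := by
    intro m
    have h5 := hE m
    rw [hscale ((m : F)), hscale (0 : F)] at h5
    have h6 : ∑ i ∈ Finset.range (d + 2), (0 : F) ^ i * h i = h 0 := by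
      rw [Finset.sum_eq_single 0]
      · simp
      · intro i _ hi
        rw [zero_pow hi, zero_mul]
      · intro habs; exact absurd (Finset.mem_range.mpr (by omega)) habs
    rw [h6] at h5
    rw [hχdef]
    simp only [Polynomial.eval_sub, Polynomial.eval_add, Polynomial.eval_mul,
      Polynomial.eval_finset_sum, Polynomial.eval_C, Polynomial.eval_X,
      Polynomial.eval_pow]
    rw [hscale (0 : F), h6]
    have h7 : ∑ i ∈ Finset.range (d + 2), h i * (m : F) ^ i
        = ∑ i ∈ Finset.range (d + 2), (m : F) ^ i * h i :=
      Finset.sum_congr rfl fun i _ => mul_comm _ _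
    rw [h7, h5]
    ring
  have hχ0 : χ = 0 := by
    refine Polynomial.eq_zero_of_infinite_isRoot _ ?_
    exact Set.infinite_of_injective_forall_mem
      (f := fun m : ℕ => (m : F)) Nat.cast_injective hroot
  -- Step 5: extract the coefficient of X^1
  have hc1 : χ.coeff 1 = 0 := by rw [hχ0]; simp
  have hc1' : χ.coeff 1 = h 1 - κ := by
    rw [hχdef]
    simp only [Polynomial.coeff_sub, Polynomial.coeff_add, Polynomial.finset_sum_coeff,
      Polynomial.coeff_C_mul, Polynomial.coeff_X_pow, Polynomial.coeff_C,
      Polynomial.coeff_X_one, mul_one]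
    rw [Finset.sum_eq_single 1]
    · simp
    · intro i _ hi
      rw [if_neg (by omega), mul_zero]
    · intro habs; exact absurd (Finset.mem_range.mpr (by omega)) habs
  have hκ1 : κ = h 1 := by
    rw [hc1] at hc1'
    exact (sub_eq_zero.mp hc1'.symm).symm
  -- Step 6: conclude
  have h7 : eval r (homogeneousComponent 1 e) - eval s (homogeneousComponent 1 e)
      = eval u (homogeneousComponent 1 e) := by
    refine eval_sub_of_degree_one _ (fun δ hδ => ?_) r s
    have := MvPolynomial.mem_support_iff.mp hδ
    rw [coeff_homogeneousComponent] at this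
    by_contra hne
    rw [if_neg hne] at this
    exact this rfl
  rw [h7]
  exact hκ1

/-- Every polynomial is `H⁰ + H¹ + ∑_{2 ≤ i ≤ deg} Hⁱ`. -/
lemma decomp_three (c : MvPolynomial (Fin n) F) :
    homogeneousComponent 0 c + homogeneousComponent 1 c
      + ∑ i ∈ Finset.Icc 2 c.totalDegree, homogeneousComponent i c = c := by
  set d := c.totalDegree with hd
  have base : ∑ i ∈ Finset.range (d + 2), homogeneousComponent i c = c := by
    rw [Finset.sum_range_succ, homogeneousComponent_eq_zero (d + 1) c (by omega), add_zero]
    exact sum_homogeneousComponent c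
  have hsplit : ∑ i ∈ Finset.range (d + 2), homogeneousComponent i c
      = (homogeneousComponent 0 c + homogeneousComponent 1 c)
        + ∑ i ∈ Finset.Ico 2 (d + 2), homogeneousComponent i c := by
    rw [Finset.range_eq_Ico,
      ← Finset.sum_Ico_consecutive (fun i => homogeneousComponent i c)
        (Nat.zero_le 2) (by omega : 2 ≤ d + 2)]
    congr 1
    rw [← Finset.range_eq_Ico, Finset.sum_range_succ, Finset.sum_range_one]
  have htail : ∑ i ∈ Finset.Ico 2 (d + 2), homogeneousComponent i c
      = ∑ i ∈ Finset.Icc 2 d, homogeneousComponent i c := by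
    rcases Nat.lt_or_ge d 1 with hd1 | hd1
    · interval_cases d
      · rw [show Finset.Ico 2 2 = ∅ from Finset.Ico_self 2,
          show Finset.Icc 2 0 = ∅ from Finset.Icc_eq_empty (by omega)]
    · rw [Finset.sum_Ico_succ_top (by omega) _, Finset.Ico_add_one_right_eq_Icc,
        homogeneousComponent_eq_zero (d + 1) c (by omega), add_zero]
  conv_rhs => rw [← base]
  rw [hsplit, htail]

/-- reduction: the two goals of the theorem follow from the `H¹` difference identity. -/
lemma linearize_goals_of_H1 (c : MvPolynomial (Fin n) F) (r s : Fin n → F)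
    (hmain : eval r c - eval s c
      = eval r (homogeneousComponent 1 c) - eval s (homogeneousComponent 1 c)) :
    linearize r c = linearize s c ∧ eval r c = eval r (linearize s c) := by
  have heval : ∀ w : Fin n → F, eval w (homogeneousComponent 0 c)
      + eval w (homogeneousComponent 1 c)
      + ∑ i ∈ Finset.Icc 2 c.totalDegree, eval w (homogeneousComponent i c) = eval w c := by
    intro w
    rw [← map_sum, ← map_add, ← map_add, decomp_three]
  have h0eq : ∀ w : Fin n → F, eval w (homogeneousComponent 0 c) = coeff 0 c := by
    intro w
    rw [homogeneousComponent_zero, eval_C]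
  have hsums : ∑ i ∈ Finset.Icc 2 c.totalDegree, eval r (homogeneousComponent i c)
      = ∑ i ∈ Finset.Icc 2 c.totalDegree, eval s (homogeneousComponent i c) := by
    have hr := heval r
    have hs := heval s
    rw [h0eq r] at hr
    rw [h0eq s] at hs
    linear_combination hr - hs + hmain
  have hlin : linearize r c = linearize s c := by
    unfold linearize
    rw [hsums]
  refine ⟨hlin, ?_⟩
  rw [← hlin]
  unfold linearize
  rw [map_add, map_add, eval_C, ← heval r]

/-- **Main coefficient lemma**. -/
lemma main_H1 (p q : MvPolynomial (Fin n) F) (α : Fin n →₀ ℕ) (r s : Fin n → F)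
    (hvan : ∀ β : Fin n →₀ ℕ, α < β →
      eval r (coeff β (shiftDiff p q)) = 0 ∧ eval s (coeff β (shiftDiff p q)) = 0) :
    eval r (coeff α (shiftDiff p q)) - eval s (coeff α (shiftDiff p q))
      = eval r (homogeneousComponent 1 (coeff α (shiftDiff p q)))
        - eval s (homogeneousComponent 1 (coeff α (shiftDiff p q))) := by
  classical
  have hsd : shiftDiff p q = shiftOp p - map C q := rfl
  set e : MvPolynomial (Fin n) F := coeff α (shiftOp p) with he
  have hcoeff : ∀ β : Fin n →₀ ℕ, coeff β (shiftDiff p q)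
      = coeff β (shiftOp p) - C (coeff β q) := by
    intro β
    rw [hsd, coeff_sub, coeff_map]
  -- the coefficients of p(x+r) and p(x+s) agree above α
  set pr : MvPolynomial (Fin n) F := aeval (fun i => X i + C (r i)) p with hpr
  set ps : MvPolynomial (Fin n) F := aeval (fun i => X i + C (s i)) p with hps
  have hW : ∀ β : Fin n →₀ ℕ, α < β → coeff β (pr - ps) = 0 := by
    intro β hβ
    rw [coeff_sub, hpr, hps, ← eval_coeff_shiftOp r p β, ← eval_coeff_shiftOp s p β]
    have h1 : eval r (coeff β (shiftOp p)) = coeff β q := by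
      have h0 := (hvan β hβ).1
      rw [hcoeff β, map_sub, eval_C] at h0
      linear_combination h0
    have h2 : eval s (coeff β (shiftOp p)) = coeff β q := by
      have h0 := (hvan β hβ).2
      rw [hcoeff β, map_sub, eval_C] at h0
      linear_combination h0
    rw [h1, h2, sub_self]
  -- triangularity
  have hT := coeff_shift_of_upper_zero (pr - ps) α hW
  -- compute both sides of hT
  have hL : coeff α (shiftOp (pr - ps))
      = aeval (fun i => X i + C (r i)) e - aeval (fun i => X i + C (s i)) e := by
    rw [map_sub, coeff_sub, hpr, hps, ← map_shift_shiftOp r p, ← map_shift_shiftOp s p,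
      coeff_map, coeff_map, he]
    rfl
  have hR : coeff α (pr - ps) = eval r e - eval s e := by
    rw [coeff_sub, hpr, hps, ← eval_coeff_shiftOp r p α, ← eval_coeff_shiftOp s p α, he]
  rw [hL, hR] at hT
  -- apply the analytic lemma
  have hkey := eval_sub_eq_eval_H1 e r s hT
  -- transfer from e to the actual coefficient
  have hc : coeff α (shiftDiff p q) = e - C (coeff α q) := by rw [hcoeff α, he]
  have hH1 : homogeneousComponent 1 (coeff α (shiftDiff p q)) = homogeneousComponent 1 e := by
    rw [hc, map_sub, homogeneousComponent_C_eq_zero one_ne_zero, sub_zero]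
  rw [hH1, hc, map_sub, map_sub, eval_C, eval_C]
  linear_combination hkey

/-- For an admissible cover `{S 0, …, S m}` of `S_{p,q}`, if
`r, s ∈ V_F(S 0 ∪ ⋯ ∪ S (ℓ-1))` then for every `c ∈ S 0 ∪ ⋯ ∪ S ℓ` the linearizations of `c`
at `r` and at `s` agree as polynomials; in particular `c(r) = L_{a=s}(c)(r)`. -/
theorem linearize_eq_of_mem_zeroSet (p q : MvPolynomial (Fin n) F) (m : ℕ)
    (S : ℕ → Set (MvPolynomial (Fin n) F))
    (hS : IsAdmissibleCover p q m S)
    (ℓ : ℕ) (hℓ : ℓ ≤ m) (r s : Fin n → F)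
    (hr : r ∈ zeroSet (⋃ i ∈ Finset.range ℓ, S i))
    (hs : s ∈ zeroSet (⋃ i ∈ Finset.range ℓ, S i)) :
    ∀ c ∈ ⋃ i ∈ Finset.range (ℓ + 1), S i,
      linearize r c = linearize s c ∧ eval r c = eval r (linearize s c) := by
  intro c hc
  simp only [Set.mem_iUnion] at hc
  obtain ⟨ℓ', hmem, hcS⟩ := hc
  have hmem' : ℓ' ≤ ℓ := by
    have := Finset.mem_range.mp hmem; omega
  by_cases hℓ0 : ℓ' = 0
  · -- the degree ≤ 1 case
    subst hℓ0
    have hdeg : c.totalDegree ≤ 1 := hS.2.1 c hcS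
    apply linearize_goals_of_H1
    have hIcc : Finset.Icc 2 c.totalDegree = ∅ := Finset.Icc_eq_empty (by omega)
    have hdec := decomp_three c
    rw [hIcc, Finset.sum_empty, add_zero] at hdec
    conv_lhs => rw [← hdec]
    simp only [map_add, homogeneousComponent_zero, eval_C]
    ring
  · -- the main case
    have hℓ1 : 1 ≤ ℓ' := by omega
    have hℓm : ℓ' ≤ m := le_trans hmem' hℓ
    have hcov : c ∈ coeffSet p q := by
      rw [← hS.1]
      exact Set.mem_iUnion.mpr ⟨ℓ',
        Set.mem_iUnion.mpr ⟨Finset.mem_range.mpr (by omega), hcS⟩⟩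
    obtain ⟨α, hαsupp, rfl⟩ := hcov
    apply linearize_goals_of_H1
    apply main_H1 p q α r s
    intro β hβ
    by_cases hβsupp : β ∈ (shiftDiff p q).support
    · have hmem2 := hS.2.2 ℓ' hℓ1 hℓm α hαsupp hcS β hβsupp hβ
      have hmem3 : coeff β (shiftDiff p q) ∈ ⋃ i ∈ Finset.range ℓ, S i := by
        simp only [Set.mem_iUnion] at hmem2 ⊢
        obtain ⟨i, hi, hmemi⟩ := hmem2
        exact ⟨i, Finset.mem_range.mpr
          (lt_of_lt_of_le (Finset.mem_range.mp hi) hmem'), hmemi⟩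
      exact ⟨hr _ hmem3, hs _ hmem3⟩
    · have h0 : coeff β (shiftDiff p q) = 0 :=
        MvPolynomial.notMem_support_iff.mp hβsupp
      rw [h0]
      simp

end
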